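/- Every index i ∈ C̄ = {1,…,n} ∖ C is dangerous. Moreover, there exists a finite sequence I_1, I_2, …, I_ℓ of pairwise disjoint dangerous intervals, each lying entirely to the right of the previous one, such that every dangerous index belongs to I_1 ∪ ⋯ ∪ I_ℓ; in particular C̄ ⊆ I_1 ∪ ⋯ ∪ I_ℓ. -/

import Mathlib

/-- The interval `[i,j] ⊆ {1,…,n}` is dangerous (w.r.t. `C`, `w`, `δ`):
`w(C ∩ [i,j]) ≤ (δ/(1+δ))·w([i,j])`. -/
def DangerousInterval (n : ℕ) (w : ℕ → ℝ) (C : Finset ℕ) (δ : ℝ) (i j : ℕ) : Prop :=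
  1 ≤ i ∧ i ≤ j ∧ j ≤ n ∧
    ∑ k ∈ C ∩ Finset.Icc i j, w k ≤ (δ / (1 + δ)) * ∑ k ∈ Finset.Icc i j, w k

/-- The index `i` is dangerous if it is the left endpoint of some dangerous interval. -/
def DangerousIndex (n : ℕ) (w : ℕ → ℝ) (C : Finset ℕ) (δ : ℝ) (i : ℕ) : Prop :=
  ∃ j, DangerousInterval n w C δ i j

lemma dangerous_aux (n : ℕ) (w : ℕ → ℝ) (C : Finset ℕ) (δ : ℝ) :
    ∀ t s : ℕ, n + 1 ≤ s + t →
    ∃ (ℓ : ℕ) (a b : ℕ → ℕ),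
      (∀ k, k < ℓ → DangerousInterval n w C δ (a k) (b k) ∧ s ≤ a k) ∧
      (∀ k, k + 1 < ℓ → b k < a (k + 1)) ∧
      (∀ i, s ≤ i → DangerousIndex n w C δ i → ∃ k, k < ℓ ∧ a k ≤ i ∧ i ≤ b k) := by
  intro t
  induction t with
  | zero =>
    intro s hs
    refine ⟨0, fun _ => 0, fun _ => 0, ?_, ?_, ?_⟩
    · intro k hk; omega
    · intro k hk; omega
    · intro i hi ⟨j, _, hij, hjn, _⟩; omega
  | succ t ih =>
    intro s hs
    classical
    by_cases h : ∃ i, s ≤ i ∧ DangerousIndex n w C δ i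
    · set i0 := Nat.find h with hi0def
      obtain ⟨hsi0, hdi0⟩ := Nat.find_spec h
      obtain ⟨j0, hd⟩ := hdi0
      obtain ⟨h1, h2, h3, h4⟩ := hd
      obtain ⟨ℓ, a, b, hdang, hchain, hcov⟩ := ih (j0 + 1) (by omega)
      refine ⟨ℓ + 1, fun k => Nat.casesOn k i0 a, fun k => Nat.casesOn k j0 b,
        ?_, ?_, ?_⟩
      · intro k hk
        cases k with
        | zero => exact ⟨⟨h1, h2, h3, h4⟩, hsi0⟩
        | succ m =>
          obtain ⟨hd', hs'⟩ := hdang m (by omega)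
          refine ⟨hd', ?_⟩
          show s ≤ a m
          omega
      · intro k hk
        cases k with
        | zero =>
          have := (hdang 0 (by omega)).2
          show j0 < a 0
          omega
        | succ m => exact hchain m (by omega)
      · intro i hi hdi
        rcases le_or_gt i j0 with hle | hlt
        · exact ⟨0, by omega, Nat.find_min' h ⟨hi, hdi⟩, hle⟩
        · obtain ⟨k, hk, hak, hbk⟩ := hcov i (by omega) hdi
          exact ⟨k + 1, by omega, hak, hbk⟩
    · refine ⟨0, fun _ => 0, fun _ => 0, ?_, ?_, ?_⟩
      · intro k hk; omega
      · intro k hk; omega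
      · intro i hi hdi; exact absurd ⟨i, hi, hdi⟩ h

/-- Every index `i ∈ {1,…,n} ∖ C` is dangerous, and there exists a
finite sequence `I_1, …, I_ℓ` of dangerous intervals `[a k, b k]`, each lying entirely
to the right of the previous one (hence pairwise disjoint), whose union contains every
dangerous index; in particular it contains `C̄`. -/
theorem dangerous_intervals_cover (n : ℕ) (hn : 1 ≤ n) (w : ℕ → ℝ)
    (hw : ∀ i, 1 ≤ i → i ≤ n → 0 ≤ w i)
    (C : Finset ℕ) (hC : C ⊆ Finset.Icc 1 n) (δ : ℝ) (hδ : 0 < δ) :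
    (∀ i ∈ Finset.Icc 1 n \ C, DangerousIndex n w C δ i) ∧
    ∃ (ℓ : ℕ) (a b : ℕ → ℕ),
      (∀ k, k < ℓ → DangerousInterval n w C δ (a k) (b k)) ∧
      (∀ k, k + 1 < ℓ → b k < a (k + 1)) ∧
      (∀ i, DangerousIndex n w C δ i → ∃ k, k < ℓ ∧ a k ≤ i ∧ i ≤ b k) := by
  constructor
  · intro i hi
    simp only [Finset.mem_sdiff, Finset.mem_Icc] at hi
    refine ⟨i, hi.1.1, le_refl i, hi.1.2, ?_⟩
    have hemp : C ∩ Finset.Icc i i = ∅ := by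
      ext x
      simp only [Finset.mem_inter, Finset.mem_Icc, Finset.notMem_empty, iff_false]
      rintro ⟨hx, hx1, hx2⟩
      have : x = i := le_antisymm hx2 hx1
      exact hi.2 (this ▸ hx)
    rw [hemp]
    simp only [Finset.sum_empty, Finset.Icc_self, Finset.sum_singleton]
    have hwi : 0 ≤ w i := hw i hi.1.1 hi.1.2
    have : 0 ≤ δ / (1 + δ) := by positivity
    positivity
  · obtain ⟨ℓ, a, b, h1, h2, h3⟩ := dangerous_aux n w C δ (n + 1) 0 (by omega)
    exact ⟨ℓ, a, b, fun k hk => (h1 k hk).1, h2, fun i hdi => h3 i (Nat.zero_le i) hdi⟩
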